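/- Let n ≥ 4 and let x₁, …, xₙ be vectors in a real or complex inner product space, with x_{n+1} = x₁. Define c_{ij} = ∑_{r=0}^{2} (−1)^{r+1} C(n−j+i−1, 2−r)·C(j−i−1, r) for 1 < j − i < n − 1. Then C(n−2, 2) · ∑_{i=1}^{n} ‖x_i − x_{i+1}‖² = ∑_{1≤i<j≤n, 1<j−i<n−1} c_{ij} ‖x_i − x_j‖² + ∑_{1≤i<j<k<l≤n} ‖x_i − x_j + x_k − x_l‖² (generalized Euler identity). -/
import Mathlib
open Finset

lemma norm_quad {V : Type*} [NormedAddCommGroup V] [InnerProductSpace ℝ V] (a b c d : V) :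
    ‖a - b + c - d‖ ^ 2 = ‖a - b‖ ^ 2 + ‖c - d‖ ^ 2 + ‖a - d‖ ^ 2 + ‖b - c‖ ^ 2
      - ‖a - c‖ ^ 2 - ‖b - d‖ ^ 2 := by
  simp only [norm_sub_sq_real, norm_add_sq_real, inner_add_left, inner_sub_left,
    inner_add_right, inner_sub_right]
  linarith [real_inner_comm a b, real_inner_comm a c, real_inner_comm a d,
    real_inner_comm b c, real_inner_comm b d, real_inner_comm c d]

lemma sum_aux (a b : ℕ) : ∑ v ∈ Icc 1 b, ((v - 1 - a : ℕ) : ℝ) = ((b - a).choose 2 : ℕ) := by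
  induction b with
  | zero => simp
  | succ b ih =>
      rw [Finset.sum_Icc_succ_top (by omega), ih]
      have h1 : b + 1 - 1 - a = b - a := by omega
      have h2 : (b + 1 - a).choose 2 = (b - a).choose 2 + (b - a) := by
        rcases le_or_gt a b with h | h
        · have : b + 1 - a = (b - a) + 1 := by omega
          rw [this, Nat.choose_succ_succ (b - a) 1, Nat.choose_one_right]
          simp only [show Nat.succ 1 = 2 from rfl]
          omega
        · have hba : b - a = 0 := by omega
          have h0 : (b + 1 - a).choose 2 = 0 := Nat.choose_eq_zero_of_lt (by omega)
          rw [h0, hba]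
          simp
      rw [h1, h2]
      push_cast
      ring

lemma countB (n a b : ℕ) (hb : b ≤ n) :
    ∑ u ∈ Icc 1 n, (if a < u ∧ u ≤ b then (1 : ℝ) else 0) = ((b - a : ℕ) : ℝ) := by
  have : ∀ u ∈ Icc 1 n, (if a < u ∧ u ≤ b then (1 : ℝ) else 0)
      = if u ∈ Icc (a + 1) b then (1 : ℝ) else 0 := by
    intro u hu
    rw [mem_Icc] at hu
    by_cases h : a < u ∧ u ≤ b
    · rw [if_pos h, if_pos (by rw [mem_Icc]; omega)]
    · rw [if_neg h, if_neg (by rw [mem_Icc]; omega)]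
  rw [Finset.sum_congr rfl this, Finset.sum_ite_mem]
  have : Icc 1 n ∩ Icc (a + 1) b = Icc (a + 1) b := by
    apply Finset.inter_eq_right.mpr
    apply Finset.Icc_subset_Icc <;> omega
  rw [this]
  simp [Nat.card_Icc]

lemma countA (n a b : ℕ) (hb : b ≤ n) :
    ∑ u ∈ Icc 1 n, ∑ v ∈ Icc 1 n, (if a < u ∧ u < v ∧ v ≤ b then (1 : ℝ) else 0)
      = (((b - a).choose 2 : ℕ) : ℝ) := by
  rw [Finset.sum_comm]
  have h1 : ∀ v ∈ Icc 1 n, (∑ u ∈ Icc 1 n, if a < u ∧ u < v ∧ v ≤ b then (1 : ℝ) else 0)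
      = if v ∈ Icc 1 b then ((v - 1 - a : ℕ) : ℝ) else 0 := by
    intro v hv
    rw [mem_Icc] at hv
    by_cases hvb : v ≤ b
    · have hmem : v ∈ Icc 1 b := by rw [mem_Icc]; omega
      rw [if_pos hmem]
      have : ∀ u ∈ Icc 1 n, (if a < u ∧ u < v ∧ v ≤ b then (1 : ℝ) else 0)
          = if a < u ∧ u ≤ v - 1 then (1 : ℝ) else 0 := by
        intro u hu
        rw [mem_Icc] at hu
        by_cases h : a < u ∧ u < v ∧ v ≤ b
        · rw [if_pos h, if_pos (by omega)]
        · rw [if_neg h, if_neg (by omega)]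
      rw [Finset.sum_congr rfl this, countB n a (v - 1) (by omega)]
    · have hmem : v ∉ Icc 1 b := by rw [mem_Icc]; omega
      rw [if_neg hmem]
      apply Finset.sum_eq_zero
      intro u hu
      rw [if_neg]; tauto
  rw [Finset.sum_congr rfl h1, Finset.sum_ite_mem]
  have : Icc 1 n ∩ Icc 1 b = Icc 1 b := by
    apply Finset.inter_eq_right.mpr
    apply Finset.Icc_subset_Icc <;> omega
  rw [this, sum_aux]

section perms
variable (s : Finset ℕ) (f : ℕ → ℕ → ℕ → ℕ → ℝ)

lemma sc1 : (∑ i ∈ s, ∑ j ∈ s, ∑ k ∈ s, ∑ l ∈ s, f i j k l)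
    = ∑ i ∈ s, ∑ j ∈ s, ∑ k ∈ s, ∑ l ∈ s, f j i k l := Finset.sum_comm

lemma sc2 : (∑ i ∈ s, ∑ j ∈ s, ∑ k ∈ s, ∑ l ∈ s, f i j k l)
    = ∑ i ∈ s, ∑ j ∈ s, ∑ k ∈ s, ∑ l ∈ s, f i k j l :=
  Finset.sum_congr rfl fun _ _ => Finset.sum_comm

lemma sc3 : (∑ i ∈ s, ∑ j ∈ s, ∑ k ∈ s, ∑ l ∈ s, f i j k l)
    = ∑ i ∈ s, ∑ j ∈ s, ∑ k ∈ s, ∑ l ∈ s, f i j l k :=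
  Finset.sum_congr rfl fun _ _ => Finset.sum_congr rfl fun _ _ => Finset.sum_comm

-- pair (k,l) to front : target integrand f c d a b
lemma perm_kl : (∑ i ∈ s, ∑ j ∈ s, ∑ k ∈ s, ∑ l ∈ s, f i j k l)
    = ∑ k ∈ s, ∑ l ∈ s, ∑ i ∈ s, ∑ j ∈ s, f i j k l := by
  calc (∑ i ∈ s, ∑ j ∈ s, ∑ k ∈ s, ∑ l ∈ s, f i j k l)
      = ∑ a ∈ s, ∑ b ∈ s, ∑ c ∈ s, ∑ d ∈ s, f a c b d := sc2 s f
    _ = ∑ a ∈ s, ∑ b ∈ s, ∑ c ∈ s, ∑ d ∈ s, f b c a d := sc1 s (fun a b c d => f a c b d)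
    _ = ∑ a ∈ s, ∑ b ∈ s, ∑ c ∈ s, ∑ d ∈ s, f b d a c := sc3 s (fun a b c d => f b c a d)
    _ = ∑ a ∈ s, ∑ b ∈ s, ∑ c ∈ s, ∑ d ∈ s, f c d a b := sc2 s (fun a b c d => f b d a c)

-- pair (i,l) : target f a c d b
lemma perm_il : (∑ i ∈ s, ∑ j ∈ s, ∑ k ∈ s, ∑ l ∈ s, f i j k l)
    = ∑ i ∈ s, ∑ l ∈ s, ∑ j ∈ s, ∑ k ∈ s, f i j k l := by
  calc (∑ i ∈ s, ∑ j ∈ s, ∑ k ∈ s, ∑ l ∈ s, f i j k l)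
      = ∑ a ∈ s, ∑ b ∈ s, ∑ c ∈ s, ∑ d ∈ s, f a b d c := sc3 s f
    _ = ∑ a ∈ s, ∑ b ∈ s, ∑ c ∈ s, ∑ d ∈ s, f a c d b := sc2 s (fun a b c d => f a b d c)

-- pair (j,k) : target f c a b d
lemma perm_jk : (∑ i ∈ s, ∑ j ∈ s, ∑ k ∈ s, ∑ l ∈ s, f i j k l)
    = ∑ j ∈ s, ∑ k ∈ s, ∑ i ∈ s, ∑ l ∈ s, f i j k l := by
  calc (∑ i ∈ s, ∑ j ∈ s, ∑ k ∈ s, ∑ l ∈ s, f i j k l)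
      = ∑ a ∈ s, ∑ b ∈ s, ∑ c ∈ s, ∑ d ∈ s, f b a c d := sc1 s f
    _ = ∑ a ∈ s, ∑ b ∈ s, ∑ c ∈ s, ∑ d ∈ s, f c a b d := sc2 s (fun a b c d => f b a c d)

-- pair (i,k) : target f a c b d
lemma perm_ik : (∑ i ∈ s, ∑ j ∈ s, ∑ k ∈ s, ∑ l ∈ s, f i j k l)
    = ∑ i ∈ s, ∑ k ∈ s, ∑ j ∈ s, ∑ l ∈ s, f i j k l := sc2 s f

-- pair (j,l) : target f c a d b
lemma perm_jl : (∑ i ∈ s, ∑ j ∈ s, ∑ k ∈ s, ∑ l ∈ s, f i j k l)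
    = ∑ j ∈ s, ∑ l ∈ s, ∑ i ∈ s, ∑ k ∈ s, f i j k l := by
  calc (∑ i ∈ s, ∑ j ∈ s, ∑ k ∈ s, ∑ l ∈ s, f i j k l)
      = ∑ a ∈ s, ∑ b ∈ s, ∑ c ∈ s, ∑ d ∈ s, f b a c d := sc1 s f
    _ = ∑ a ∈ s, ∑ b ∈ s, ∑ c ∈ s, ∑ d ∈ s, f b a d c := sc3 s (fun a b c d => f b a c d)
    _ = ∑ a ∈ s, ∑ b ∈ s, ∑ c ∈ s, ∑ d ∈ s, f c a d b := sc2 s (fun a b c d => f b a d c)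

end perms

lemma sum_indmul (s : Finset ℕ) (P : ℕ → Prop) [DecidablePred P] (c : ℝ) :
    (∑ u ∈ s, if P u then c else 0) = (∑ u ∈ s, if P u then (1 : ℝ) else 0) * c := by
  rw [Finset.sum_mul]
  apply Finset.sum_congr rfl
  intros
  split_ifs <;> ring

lemma coeff_eq (n a b : ℕ) (hn : 4 ≤ n) (ha1 : 1 ≤ a) (ha2 : a ≤ n) (hb1 : 1 ≤ b) (hb2 : b ≤ n) :
    ((if a < b ∧ 1 < b - a ∧ b - a < n - 1 then
        (∑ r ∈ Finset.range 3, (-1 : ℝ) ^ (r + 1) *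
            Nat.choose (n - b + a - 1) (2 - r) * Nat.choose (b - a - 1) r) else 0)
      + (if a < b then (((n - b).choose 2 : ℕ) : ℝ) else 0)
      + (if a < b then (((a - 1).choose 2 : ℕ) : ℝ) else 0)
      + (((b - 1 - a).choose 2 : ℕ) : ℝ)
      + (if a < b then ((a - 1 : ℕ) : ℝ) * ((n - b : ℕ) : ℝ) else 0)
      - ((b - 1 - a : ℕ) : ℝ) * ((n - b : ℕ) : ℝ)
      - ((a - 1 : ℕ) : ℝ) * ((b - 1 - a : ℕ) : ℝ))
    = (if b = a + 1 then ((Nat.choose (n - 2) 2 : ℕ) : ℝ) else 0)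
      + (if a = 1 ∧ b = n then ((Nat.choose (n - 2) 2 : ℕ) : ℝ) else 0) := by
  rw [Finset.sum_range_succ, Finset.sum_range_succ, Finset.sum_range_one]
  norm_num
  by_cases hab : a < b
  · have hd1 : b - 1 - a = b - a - 1 := by omega
    by_cases he0 : b - a = 1
    · -- adjacent case
      rw [if_neg (by omega), if_pos hab, if_pos hab, if_pos hab,
        if_pos (by omega : b = a + 1), if_neg (by omega : ¬(a = 1 ∧ b = n))]
      have h2 : b - 1 - a = 0 := by omega
      have h3 : n - 2 = (a - 1) + (n - b) := by omega
      rw [h2, h3]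
      simp only [Nat.cast_choose_two]
      push_cast
      ring
    · by_cases hd : b - a < n - 1
      · -- middle case
        rw [if_pos ⟨hab, by omega, hd⟩, if_pos hab, if_pos hab, if_pos hab,
          if_neg (by omega : ¬b = a + 1), if_neg (by omega : ¬(a = 1 ∧ b = n))]
        have h1 : n - b + a - 1 = (a - 1) + (n - b) := by omega
        rw [h1, hd1]
        simp only [Nat.cast_choose_two]
        push_cast
        ring
      · -- extreme case : a = 1, b = n
        have hae : a = 1 := by omega
        have hbe : b = n := by omega
        rw [if_neg (by omega), if_pos hab, if_pos hab, if_pos hab,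
          if_neg (by omega : ¬b = a + 1), if_pos ⟨hae, hbe⟩]
        have h1 : n - b = 0 := by omega
        have h2 : a - 1 = 0 := by omega
        have h3 : b - 1 - a = n - 2 := by omega
        rw [h1, h2, h3]
        norm_num
  · rw [if_neg (by tauto), if_neg hab, if_neg hab, if_neg hab,
      if_neg (by omega : ¬b = a + 1), if_neg (by omega : ¬(a = 1 ∧ b = n))]
    have h1 : b - 1 - a = 0 := by omega
    rw [h1]
    norm_num

lemma term1 (n : ℕ) (q : ℕ → ℕ → ℝ) :
    (∑ i ∈ Icc 1 n, ∑ j ∈ Icc 1 n, ∑ k ∈ Icc 1 n, ∑ l ∈ Icc 1 n,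
        if i < j ∧ j < k ∧ k < l then q i j else 0)
      = ∑ i ∈ Icc 1 n, ∑ j ∈ Icc 1 n,
          (if i < j then (((n - j).choose 2 : ℕ) : ℝ) else 0) * q i j := by
  apply Finset.sum_congr rfl; intro i hi
  apply Finset.sum_congr rfl; intro j hj
  rw [mem_Icc] at hi hj
  by_cases hij : i < j
  · rw [if_pos hij]
    calc (∑ k ∈ Icc 1 n, ∑ l ∈ Icc 1 n, if i < j ∧ j < k ∧ k < l then q i j else 0)
        = ∑ k ∈ Icc 1 n, (∑ l ∈ Icc 1 n, if j < k ∧ k < l ∧ l ≤ n then (1 : ℝ) else 0) * q i j := by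
          apply Finset.sum_congr rfl; intro k hk
          rw [← sum_indmul]
          apply Finset.sum_congr rfl; intro l hl
          rw [mem_Icc] at hk hl
          split_ifs <;> first | rfl | (exfalso; omega)
      _ = (∑ k ∈ Icc 1 n, ∑ l ∈ Icc 1 n, if j < k ∧ k < l ∧ l ≤ n then (1 : ℝ) else 0) * q i j := by
          rw [Finset.sum_mul]
      _ = (((n - j).choose 2 : ℕ) : ℝ) * q i j := by rw [countA n j n le_rfl]
  · rw [if_neg hij, zero_mul]
    apply Finset.sum_eq_zero; intro k _
    apply Finset.sum_eq_zero; intro l _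
    rw [if_neg (by tauto)]

lemma term2 (n : ℕ) (q : ℕ → ℕ → ℝ) :
    (∑ i ∈ Icc 1 n, ∑ j ∈ Icc 1 n, ∑ k ∈ Icc 1 n, ∑ l ∈ Icc 1 n,
        if i < j ∧ j < k ∧ k < l then q k l else 0)
      = ∑ i ∈ Icc 1 n, ∑ j ∈ Icc 1 n,
          (if i < j then (((i - 1).choose 2 : ℕ) : ℝ) else 0) * q i j := by
  rw [perm_kl (Icc 1 n) (fun i j k l => if i < j ∧ j < k ∧ k < l then q k l else 0)]
  apply Finset.sum_congr rfl; intro k hk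
  apply Finset.sum_congr rfl; intro l hl
  rw [mem_Icc] at hk hl
  by_cases hkl : k < l
  · rw [if_pos hkl]
    calc (∑ i ∈ Icc 1 n, ∑ j ∈ Icc 1 n, if i < j ∧ j < k ∧ k < l then q k l else 0)
        = ∑ i ∈ Icc 1 n, (∑ j ∈ Icc 1 n, if 0 < i ∧ i < j ∧ j ≤ k - 1 then (1 : ℝ) else 0) * q k l := by
          apply Finset.sum_congr rfl; intro i hi
          rw [← sum_indmul]
          apply Finset.sum_congr rfl; intro j hj
          rw [mem_Icc] at hi hj
          split_ifs <;> first | rfl | (exfalso; omega)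
      _ = (∑ i ∈ Icc 1 n, ∑ j ∈ Icc 1 n, if 0 < i ∧ i < j ∧ j ≤ k - 1 then (1 : ℝ) else 0) * q k l := by
          rw [Finset.sum_mul]
      _ = (((k - 1).choose 2 : ℕ) : ℝ) * q k l := by
          rw [countA n 0 (k - 1) (by omega)]
          simp
  · rw [if_neg hkl, zero_mul]
    apply Finset.sum_eq_zero; intro i _
    apply Finset.sum_eq_zero; intro j _
    rw [if_neg (by tauto)]

lemma term3 (n : ℕ) (q : ℕ → ℕ → ℝ) :
    (∑ i ∈ Icc 1 n, ∑ j ∈ Icc 1 n, ∑ k ∈ Icc 1 n, ∑ l ∈ Icc 1 n,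
        if i < j ∧ j < k ∧ k < l then q i l else 0)
      = ∑ i ∈ Icc 1 n, ∑ j ∈ Icc 1 n, (((j - 1 - i).choose 2 : ℕ) : ℝ) * q i j := by
  rw [perm_il (Icc 1 n) (fun i j k l => if i < j ∧ j < k ∧ k < l then q i l else 0)]
  apply Finset.sum_congr rfl; intro i hi
  apply Finset.sum_congr rfl; intro l hl
  rw [mem_Icc] at hi hl
  calc (∑ j ∈ Icc 1 n, ∑ k ∈ Icc 1 n, if i < j ∧ j < k ∧ k < l then q i l else 0)
      = ∑ j ∈ Icc 1 n, (∑ k ∈ Icc 1 n, if i < j ∧ j < k ∧ k ≤ l - 1 then (1 : ℝ) else 0) * q i l := by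
        apply Finset.sum_congr rfl; intro j hj
        rw [← sum_indmul]
        apply Finset.sum_congr rfl; intro k hk
        rw [mem_Icc] at hj hk
        split_ifs <;> first | rfl | (exfalso; omega)
    _ = (∑ j ∈ Icc 1 n, ∑ k ∈ Icc 1 n, if i < j ∧ j < k ∧ k ≤ l - 1 then (1 : ℝ) else 0) * q i l := by
        rw [Finset.sum_mul]
    _ = (((l - 1 - i).choose 2 : ℕ) : ℝ) * q i l := by rw [countA n i (l - 1) (by omega)]

lemma term4 (n : ℕ) (q : ℕ → ℕ → ℝ) :
    (∑ i ∈ Icc 1 n, ∑ j ∈ Icc 1 n, ∑ k ∈ Icc 1 n, ∑ l ∈ Icc 1 n,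
        if i < j ∧ j < k ∧ k < l then q j k else 0)
      = ∑ i ∈ Icc 1 n, ∑ j ∈ Icc 1 n,
          (if i < j then ((i - 1 : ℕ) : ℝ) * ((n - j : ℕ) : ℝ) else 0) * q i j := by
  rw [perm_jk (Icc 1 n) (fun i j k l => if i < j ∧ j < k ∧ k < l then q j k else 0)]
  apply Finset.sum_congr rfl; intro j hj
  apply Finset.sum_congr rfl; intro k hk
  rw [mem_Icc] at hj hk
  by_cases hjk : j < k
  · rw [if_pos hjk]
    calc (∑ i ∈ Icc 1 n, ∑ l ∈ Icc 1 n, if i < j ∧ j < k ∧ k < l then q j k else 0)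
        = ∑ i ∈ Icc 1 n, (if 0 < i ∧ i ≤ j - 1 then
            (∑ l ∈ Icc 1 n, if k < l ∧ l ≤ n then (1 : ℝ) else 0) * q j k else 0) := by
          apply Finset.sum_congr rfl; intro i hi
          rw [mem_Icc] at hi
          by_cases h1 : 0 < i ∧ i ≤ j - 1
          · rw [if_pos h1, ← sum_indmul]
            apply Finset.sum_congr rfl; intro l hl
            rw [mem_Icc] at hl
            split_ifs <;> first | rfl | (exfalso; omega)
          · rw [if_neg h1]
            apply Finset.sum_eq_zero; intro l hl
            rw [mem_Icc] at hl
            rw [if_neg (by omega)]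
      _ = ∑ i ∈ Icc 1 n, (if 0 < i ∧ i ≤ j - 1 then ((n - k : ℕ) : ℝ) * q j k else 0) := by
          simp only [countB n k n le_rfl]
      _ = (∑ i ∈ Icc 1 n, if 0 < i ∧ i ≤ j - 1 then (1 : ℝ) else 0) * (((n - k : ℕ) : ℝ) * q j k) := by
          rw [← sum_indmul]
      _ = ((j - 1 : ℕ) : ℝ) * ((n - k : ℕ) : ℝ) * q j k := by
          rw [countB n 0 (j - 1) (by omega)]
          simp only [Nat.sub_zero]
          ring
  · rw [if_neg hjk, zero_mul]
    apply Finset.sum_eq_zero; intro i _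
    apply Finset.sum_eq_zero; intro l _
    rw [if_neg (by tauto)]

lemma term5 (n : ℕ) (q : ℕ → ℕ → ℝ) :
    (∑ i ∈ Icc 1 n, ∑ j ∈ Icc 1 n, ∑ k ∈ Icc 1 n, ∑ l ∈ Icc 1 n,
        if i < j ∧ j < k ∧ k < l then q i k else 0)
      = ∑ i ∈ Icc 1 n, ∑ j ∈ Icc 1 n,
          (((j - 1 - i : ℕ) : ℝ) * ((n - j : ℕ) : ℝ)) * q i j := by
  rw [perm_ik (Icc 1 n) (fun i j k l => if i < j ∧ j < k ∧ k < l then q i k else 0)]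
  apply Finset.sum_congr rfl; intro i hi
  apply Finset.sum_congr rfl; intro k hk
  rw [mem_Icc] at hi hk
  calc (∑ j ∈ Icc 1 n, ∑ l ∈ Icc 1 n, if i < j ∧ j < k ∧ k < l then q i k else 0)
      = ∑ j ∈ Icc 1 n, (if i < j ∧ j ≤ k - 1 then
          (∑ l ∈ Icc 1 n, if k < l ∧ l ≤ n then (1 : ℝ) else 0) * q i k else 0) := by
        apply Finset.sum_congr rfl; intro j hj
        rw [mem_Icc] at hj
        by_cases h1 : i < j ∧ j ≤ k - 1
        · rw [if_pos h1, ← sum_indmul]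
          apply Finset.sum_congr rfl; intro l hl
          rw [mem_Icc] at hl
          split_ifs <;> first | rfl | (exfalso; omega)
        · rw [if_neg h1]
          apply Finset.sum_eq_zero; intro l hl
          rw [mem_Icc] at hl
          rw [if_neg (by omega)]
    _ = ∑ j ∈ Icc 1 n, (if i < j ∧ j ≤ k - 1 then ((n - k : ℕ) : ℝ) * q i k else 0) := by
        simp only [countB n k n le_rfl]
    _ = (∑ j ∈ Icc 1 n, if i < j ∧ j ≤ k - 1 then (1 : ℝ) else 0) * (((n - k : ℕ) : ℝ) * q i k) := by
        rw [← sum_indmul]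
    _ = (((k - 1 - i : ℕ) : ℝ) * ((n - k : ℕ) : ℝ)) * q i k := by
        rw [countB n i (k - 1) (by omega)]
        ring

lemma term6 (n : ℕ) (q : ℕ → ℕ → ℝ) :
    (∑ i ∈ Icc 1 n, ∑ j ∈ Icc 1 n, ∑ k ∈ Icc 1 n, ∑ l ∈ Icc 1 n,
        if i < j ∧ j < k ∧ k < l then q j l else 0)
      = ∑ i ∈ Icc 1 n, ∑ j ∈ Icc 1 n,
          (((i - 1 : ℕ) : ℝ) * ((j - 1 - i : ℕ) : ℝ)) * q i j := by
  rw [perm_jl (Icc 1 n) (fun i j k l => if i < j ∧ j < k ∧ k < l then q j l else 0)]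
  apply Finset.sum_congr rfl; intro j hj
  apply Finset.sum_congr rfl; intro l hl
  rw [mem_Icc] at hj hl
  calc (∑ i ∈ Icc 1 n, ∑ k ∈ Icc 1 n, if i < j ∧ j < k ∧ k < l then q j l else 0)
      = ∑ i ∈ Icc 1 n, (if 0 < i ∧ i ≤ j - 1 then
          (∑ k ∈ Icc 1 n, if j < k ∧ k ≤ l - 1 then (1 : ℝ) else 0) * q j l else 0) := by
        apply Finset.sum_congr rfl; intro i hi
        rw [mem_Icc] at hi
        by_cases h1 : 0 < i ∧ i ≤ j - 1
        · rw [if_pos h1, ← sum_indmul]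
          apply Finset.sum_congr rfl; intro k hk
          rw [mem_Icc] at hk
          split_ifs <;> first | rfl | (exfalso; omega)
        · rw [if_neg h1]
          apply Finset.sum_eq_zero; intro k hk
          rw [mem_Icc] at hk
          rw [if_neg (by omega)]
    _ = ∑ i ∈ Icc 1 n, (if 0 < i ∧ i ≤ j - 1 then ((l - 1 - j : ℕ) : ℝ) * q j l else 0) := by
        simp only [countB n j (l - 1) (by omega : l - 1 ≤ n)]
    _ = (∑ i ∈ Icc 1 n, if 0 < i ∧ i ≤ j - 1 then (1 : ℝ) else 0) * (((l - 1 - j : ℕ) : ℝ) * q j l) := by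
        rw [← sum_indmul]
    _ = (((j - 1 : ℕ) : ℝ) * ((l - 1 - j : ℕ) : ℝ)) * q j l := by
        rw [countB n 0 (j - 1) (by omega)]
        simp only [Nat.sub_zero]
        ring


lemma ite_split6 (P : Prop) [Decidable P] (A B C D E F : ℝ) :
    (if P then A + B + C + D - E - F else 0)
      = (if P then A else 0) + (if P then B else 0) + (if P then C else 0)
        + (if P then D else 0) - (if P then E else 0) - (if P then F else 0) := by
  split_ifs <;> ring

lemma my_ite_mul (P : Prop) [Decidable P] (c r : ℝ) :
    (if P then c * r else 0) = (if P then c else 0) * r := by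
  split_ifs <;> ring

lemma key (n : ℕ) (hn : 4 ≤ n) (q : ℕ → ℕ → ℝ) :
    (Nat.choose (n - 2) 2 : ℝ) * (∑ i ∈ Finset.Icc 1 (n - 1), q i (i + 1) + q 1 n) =
      (∑ i ∈ Finset.Icc 1 n, ∑ j ∈ Finset.Icc 1 n,
        if i < j ∧ 1 < j - i ∧ j - i < n - 1 then
          (∑ r ∈ Finset.range 3, (-1 : ℝ) ^ (r + 1) *
              Nat.choose (n - j + i - 1) (2 - r) * Nat.choose (j - i - 1) r) * q i j else 0) +
      ∑ i ∈ Finset.Icc 1 n, ∑ j ∈ Finset.Icc 1 n, ∑ k ∈ Finset.Icc 1 n, ∑ l ∈ Finset.Icc 1 n,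
        if i < j ∧ j < k ∧ k < l then (q i j + q k l + q i l + q j k - q i k - q j l) else 0 := by
  have hquad : (∑ i ∈ Finset.Icc 1 n, ∑ j ∈ Finset.Icc 1 n, ∑ k ∈ Finset.Icc 1 n, ∑ l ∈ Finset.Icc 1 n,
        if i < j ∧ j < k ∧ k < l then (q i j + q k l + q i l + q j k - q i k - q j l) else 0)
      = ∑ i ∈ Icc 1 n, ∑ j ∈ Icc 1 n,
          (((if i < j then (((n - j).choose 2 : ℕ) : ℝ) else 0)
          + (if i < j then (((i - 1).choose 2 : ℕ) : ℝ) else 0)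
          + (((j - 1 - i).choose 2 : ℕ) : ℝ)
          + (if i < j then ((i - 1 : ℕ) : ℝ) * ((n - j : ℕ) : ℝ) else 0)
          - ((j - 1 - i : ℕ) : ℝ) * ((n - j : ℕ) : ℝ)
          - ((i - 1 : ℕ) : ℝ) * ((j - 1 - i : ℕ) : ℝ)) * q i j) := by
    simp only [ite_split6, Finset.sum_add_distrib, Finset.sum_sub_distrib]
    rw [term1 n q, term2 n q, term3 n q, term4 n q, term5 n q, term6 n q]
    simp only [← Finset.sum_add_distrib, ← Finset.sum_sub_distrib]
    apply Finset.sum_congr rfl; intro i _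
    apply Finset.sum_congr rfl; intro j _
    ring
  rw [hquad]
  have hcomb : (∑ i ∈ Finset.Icc 1 n, ∑ j ∈ Finset.Icc 1 n,
        if i < j ∧ 1 < j - i ∧ j - i < n - 1 then
          (∑ r ∈ Finset.range 3, (-1 : ℝ) ^ (r + 1) *
              Nat.choose (n - j + i - 1) (2 - r) * Nat.choose (j - i - 1) r) * q i j else 0)
      + (∑ i ∈ Icc 1 n, ∑ j ∈ Icc 1 n,
          (((if i < j then (((n - j).choose 2 : ℕ) : ℝ) else 0)
          + (if i < j then (((i - 1).choose 2 : ℕ) : ℝ) else 0)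
          + (((j - 1 - i).choose 2 : ℕ) : ℝ)
          + (if i < j then ((i - 1 : ℕ) : ℝ) * ((n - j : ℕ) : ℝ) else 0)
          - ((j - 1 - i : ℕ) : ℝ) * ((n - j : ℕ) : ℝ)
          - ((i - 1 : ℕ) : ℝ) * ((j - 1 - i : ℕ) : ℝ)) * q i j))
      = ∑ i ∈ Icc 1 n, ∑ j ∈ Icc 1 n,
          ((if j = i + 1 then ((Nat.choose (n - 2) 2 : ℕ) : ℝ) else 0) * q i j
            + (if i = 1 ∧ j = n then ((Nat.choose (n - 2) 2 : ℕ) : ℝ) else 0) * q i j) := by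
    simp only [← Finset.sum_add_distrib]
    apply Finset.sum_congr rfl; intro i hi
    apply Finset.sum_congr rfl; intro j hj
    rw [mem_Icc] at hi hj
    rw [my_ite_mul]
    have h := coeff_eq n i j hn hi.1 hi.2 hj.1 hj.2
    linear_combination (q i j) * h
  rw [hcomb]
  simp only [Finset.sum_add_distrib]
  have hdiag : (∑ i ∈ Icc 1 n, ∑ j ∈ Icc 1 n,
        (if j = i + 1 then ((Nat.choose (n - 2) 2 : ℕ) : ℝ) else 0) * q i j)
      = ((Nat.choose (n - 2) 2 : ℕ) : ℝ) * ∑ i ∈ Icc 1 (n - 1), q i (i + 1) := by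
    simp only [ite_mul, zero_mul]
    simp only [Finset.sum_ite_eq' (Icc 1 n)]
    have hc : ∀ i ∈ Icc 1 n, (if i + 1 ∈ Icc 1 n then ((Nat.choose (n - 2) 2 : ℕ) : ℝ) * q i (i + 1) else 0)
        = if i ∈ Icc 1 (n - 1) then ((Nat.choose (n - 2) 2 : ℕ) : ℝ) * q i (i + 1) else 0 := by
      intro i hi
      rw [mem_Icc] at hi
      by_cases h : i + 1 ∈ Icc 1 n
      · rw [mem_Icc] at h
        rw [if_pos (by rw [mem_Icc]; omega), if_pos (by rw [mem_Icc]; omega)]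
      · rw [mem_Icc] at h
        rw [if_neg (by rw [mem_Icc]; omega), if_neg (by rw [mem_Icc]; omega)]
    rw [Finset.sum_congr rfl hc, Finset.sum_ite_mem]
    have : Icc 1 n ∩ Icc 1 (n - 1) = Icc 1 (n - 1) := by
      apply Finset.inter_eq_right.mpr
      apply Finset.Icc_subset_Icc <;> omega
    rw [this, Finset.mul_sum]
  have hlast : (∑ i ∈ Icc 1 n, ∑ j ∈ Icc 1 n,
        (if i = 1 ∧ j = n then ((Nat.choose (n - 2) 2 : ℕ) : ℝ) else 0) * q i j)
      = ((Nat.choose (n - 2) 2 : ℕ) : ℝ) * q 1 n := by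
    simp only [ite_mul, zero_mul]
    have hz : ∀ x ∈ Icc 1 n, x ≠ 1 →
        (∑ j ∈ Icc 1 n, if x = 1 ∧ j = n then ((Nat.choose (n - 2) 2 : ℕ) : ℝ) * q x j else 0) = 0 := by
      intro x _ hne
      apply Finset.sum_eq_zero; intro j _
      exact if_neg (fun hc => hne hc.1)
    rw [Finset.sum_eq_single_of_mem 1 (by rw [mem_Icc]; omega) hz]
    have hc : ∀ j ∈ Icc 1 n, (if (1 : ℕ) = 1 ∧ j = n then ((Nat.choose (n - 2) 2 : ℕ) : ℝ) * q 1 j else 0)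
        = if j = n then ((Nat.choose (n - 2) 2 : ℕ) : ℝ) * q 1 j else 0 := by
      intro j _
      by_cases h : j = n
      · rw [if_pos ⟨rfl, h⟩, if_pos h]
      · rw [if_neg (fun hc => h hc.2), if_neg h]
    rw [Finset.sum_congr rfl hc, Finset.sum_ite_eq' (Icc 1 n) n, if_pos (by rw [mem_Icc]; omega)]
  rw [hdiag, hlast]
  ring
theorem generalized_euler_identity {𝕜 V : Type*} [RCLike 𝕜] [NormedAddCommGroup V]
    [InnerProductSpace 𝕜 V] (n : ℕ) (hn : 4 ≤ n) (x : ℕ → V) (hcyc : x (n + 1) = x 1) :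
    (Nat.choose (n - 2) 2 : ℝ) * ∑ i ∈ Finset.Icc 1 n, ‖x i - x (i + 1)‖ ^ 2 =
      (∑ i ∈ Finset.Icc 1 n, ∑ j ∈ Finset.Icc 1 n,
        if i < j ∧ 1 < j - i ∧ j - i < n - 1 then
          (∑ r ∈ Finset.range 3, (-1 : ℝ) ^ (r + 1) *
              Nat.choose (n - j + i - 1) (2 - r) * Nat.choose (j - i - 1) r) *
            ‖x i - x j‖ ^ 2 else 0) +
      ∑ i ∈ Finset.Icc 1 n, ∑ j ∈ Finset.Icc 1 n, ∑ k ∈ Finset.Icc 1 n,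
        ∑ l ∈ Finset.Icc 1 n,
          if i < j ∧ j < k ∧ k < l then ‖x i - x j + x k - x l‖ ^ 2 else 0 := by
  letI : InnerProductSpace ℝ V := InnerProductSpace.rclikeToReal 𝕜 V
  have hL : (∑ i ∈ Finset.Icc 1 n, ‖x i - x (i + 1)‖ ^ 2)
      = ∑ i ∈ Finset.Icc 1 (n - 1), ‖x i - x (i + 1)‖ ^ 2 + ‖x 1 - x n‖ ^ 2 := by
    have h0 : n = (n - 1) + 1 := by omega
    conv_lhs => rw [h0]
    rw [Finset.sum_Icc_succ_top (by omega : 1 ≤ n - 1 + 1), ← h0, hcyc, norm_sub_rev]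
  have hq : (∑ i ∈ Finset.Icc 1 n, ∑ j ∈ Finset.Icc 1 n, ∑ k ∈ Finset.Icc 1 n,
        ∑ l ∈ Finset.Icc 1 n,
          if i < j ∧ j < k ∧ k < l then ‖x i - x j + x k - x l‖ ^ 2 else 0)
      = ∑ i ∈ Finset.Icc 1 n, ∑ j ∈ Finset.Icc 1 n, ∑ k ∈ Finset.Icc 1 n,
        ∑ l ∈ Finset.Icc 1 n,
          if i < j ∧ j < k ∧ k < l then
            (‖x i - x j‖ ^ 2 + ‖x k - x l‖ ^ 2 + ‖x i - x l‖ ^ 2 + ‖x j - x k‖ ^ 2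
              - ‖x i - x k‖ ^ 2 - ‖x j - x l‖ ^ 2) else 0 := by
    apply Finset.sum_congr rfl; intro i _
    apply Finset.sum_congr rfl; intro j _
    apply Finset.sum_congr rfl; intro k _
    apply Finset.sum_congr rfl; intro l _
    by_cases h : i < j ∧ j < k ∧ k < l
    · rw [if_pos h, if_pos h, norm_quad]
    · rw [if_neg h, if_neg h]
  rw [hL, hq]
  exact key n hn (fun a b => ‖x a - x b‖ ^ 2)
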